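/- Let C ⊆ F_q^{l×m} be a linear matrix code with minimum rank distance d ≥ 1 and dimension k (as an F_q-vector space). Then k ≤ min(l,m)·(max(l,m) − d + 1). Consequently, if l ≤ m and k = lm/2, then d ≤ l/2 + 1. -/
import Mathlib

open Matrix BigOperators Module

/-- If a matrix is zero outside its first `e` rows, its rank is at most `e`. -/
lemma rank_le_of_rows_zero {l m e : ℕ} {F : Type*} [Field F] (he : e ≤ l)
    (X : Matrix (Fin l) (Fin m) F) (hX : ∀ i : Fin l, e ≤ (i : ℕ) → ∀ j, X i j = 0) :
    X.rank ≤ e := by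
  set E : Matrix (Fin l) (Fin e) F := fun i k => if (i : ℕ) = (k : ℕ) then 1 else 0 with hE
  set X' : Matrix (Fin e) (Fin m) F := X.submatrix (Fin.castLE he) id with hX'
  have hfac : X = E * X' := by
    ext i j
    rw [Matrix.mul_apply]
    by_cases hi : (i : ℕ) < e
    · rw [Finset.sum_eq_single (⟨i, hi⟩ : Fin e)]
      · simp [hE, hX']
      · intro k _ hk
        have : (i : ℕ) ≠ (k : ℕ) := fun h => hk (by ext; simp [← h])
        simp [hE, this]
      · simp
    · rw [hX i (le_of_not_gt hi) j, Finset.sum_eq_zero]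
      intro k _
      have : (i : ℕ) ≠ (k : ℕ) := by omega
      simp [hE, this]
  calc X.rank = (E * X').rank := by rw [← hfac]
    _ ≤ X'.rank := Matrix.rank_mul_le_right _ _
    _ ≤ Fintype.card (Fin e) := X'.rank_le_card_height
    _ = e := Fintype.card_fin e

/-- Key projection lemma: delete the first `e` rows. -/
lemma key_bound {l m e : ℕ} {F : Type*} [Field F]
    (C : Submodule F (Matrix (Fin l) (Fin m) F)) (he : e ≤ l)
    (h : ∀ X ∈ C, X ≠ 0 → e < X.rank) :
    finrank F C ≤ (l - e) * m := by
  have hemb : ∀ i : Fin (l - e), e + (i : ℕ) < l := fun i => by omega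
  let L : Matrix (Fin l) (Fin m) F →ₗ[F] Matrix (Fin (l - e)) (Fin m) F :=
    { toFun := fun X => X.submatrix (fun i => (⟨e + i, hemb i⟩ : Fin l)) id
      map_add' := fun A B => rfl
      map_smul' := fun c A => rfl }
  have hinj : Function.Injective (L ∘ₗ C.subtype) := by
    rw [← LinearMap.ker_eq_bot, LinearMap.ker_eq_bot']
    intro x hx
    by_contra hne
    have hX0 : (x : Matrix (Fin l) (Fin m) F) ≠ 0 := fun h => hne (Subtype.ext h)
    have hz : ∀ i : Fin l, e ≤ (i : ℕ) → ∀ j, (x : Matrix (Fin l) (Fin m) F) i j = 0 := by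
      intro i hi j
      have := congrFun (congrFun hx ⟨(i : ℕ) - e, by omega⟩) j
      simpa [L, Matrix.submatrix, show e + ((i : ℕ) - e) = (i : ℕ) by omega] using this
    exact absurd (rank_le_of_rows_zero he _ hz) (not_le.mpr (h x x.2 hX0))
  calc finrank F C ≤ finrank F (Matrix (Fin (l - e)) (Fin m) F) :=
        LinearMap.finrank_le_finrank_of_injective hinj
    _ = (l - e) * m := by simp [Module.finrank_matrix]

/-- If a matrix is zero outside its first `e` columns, its rank is at most `e`. -/
lemma rank_le_of_cols_zero {l m e : ℕ} {F : Type*} [Field F] (he : e ≤ m)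
    (X : Matrix (Fin l) (Fin m) F) (hX : ∀ j : Fin m, e ≤ (j : ℕ) → ∀ i, X i j = 0) :
    X.rank ≤ e := by
  set E : Matrix (Fin e) (Fin m) F := fun k j => if (k : ℕ) = (j : ℕ) then 1 else 0 with hE
  set X' : Matrix (Fin l) (Fin e) F := X.submatrix id (Fin.castLE he) with hX'
  have hfac : X = X' * E := by
    ext i j
    rw [Matrix.mul_apply]
    by_cases hj : (j : ℕ) < e
    · rw [Finset.sum_eq_single (⟨j, hj⟩ : Fin e)]
      · simp [hE, hX']
      · intro k _ hk
        have : (k : ℕ) ≠ (j : ℕ) := fun h => hk (by ext; simp [h])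
        simp [hE, this]
      · simp
    · rw [hX j (le_of_not_gt hj) i, Finset.sum_eq_zero]
      intro k _
      have : (k : ℕ) ≠ (j : ℕ) := by omega
      simp [hE, this]
  calc X.rank = (X' * E).rank := by rw [← hfac]
    _ ≤ X'.rank := Matrix.rank_mul_le_left _ _
    _ ≤ Fintype.card (Fin e) := X'.rank_le_card_width
    _ = e := Fintype.card_fin e

/-- Key projection lemma: delete the first `e` columns. -/
lemma key_bound_col {l m e : ℕ} {F : Type*} [Field F]
    (C : Submodule F (Matrix (Fin l) (Fin m) F)) (he : e ≤ m)
    (h : ∀ X ∈ C, X ≠ 0 → e < X.rank) :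
    finrank F C ≤ l * (m - e) := by
  have hemb : ∀ j : Fin (m - e), e + (j : ℕ) < m := fun j => by omega
  let L : Matrix (Fin l) (Fin m) F →ₗ[F] Matrix (Fin l) (Fin (m - e)) F :=
    { toFun := fun X => X.submatrix id (fun j => (⟨e + j, hemb j⟩ : Fin m))
      map_add' := fun A B => rfl
      map_smul' := fun c A => rfl }
  have hinj : Function.Injective (L ∘ₗ C.subtype) := by
    rw [← LinearMap.ker_eq_bot, LinearMap.ker_eq_bot']
    intro x hx
    by_contra hne
    have hX0 : (x : Matrix (Fin l) (Fin m) F) ≠ 0 := fun h => hne (Subtype.ext h)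
    have hz : ∀ j : Fin m, e ≤ (j : ℕ) → ∀ i, (x : Matrix (Fin l) (Fin m) F) i j = 0 := by
      intro j hj i
      have := congrFun (congrFun hx i) ⟨(j : ℕ) - e, by omega⟩
      simpa [L, Matrix.submatrix, show e + ((j : ℕ) - e) = (j : ℕ) by omega] using this
    exact absurd (rank_le_of_cols_zero he _ hz) (not_le.mpr (h x x.2 hX0))
  calc finrank F C ≤ finrank F (Matrix (Fin l) (Fin (m - e)) F) :=
        LinearMap.finrank_le_finrank_of_injective hinj
    _ = l * (m - e) := by simp [Module.finrank_matrix]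

theorem singleton_bound_rank_metric {l m : ℕ} {F : Type*} [Field F] [Fintype F]
    (C : Submodule F (Matrix (Fin l) (Fin m) F)) (d : ℕ) (hd : 1 ≤ d)
    (hmin : ∀ X ∈ C, X ≠ 0 → d ≤ X.rank)
    (hach : ∃ X ∈ C, X ≠ 0 ∧ X.rank = d) :
    Module.finrank F C ≤ min l m * (max l m - d + 1) ∧
      (l ≤ m → 2 * Module.finrank F C = l * m → d ≤ l / 2 + 1) := by
  obtain ⟨X0, hX0C, hX0ne, hX0rank⟩ := hach
  have hdl : d ≤ l := hX0rank ▸ X0.rank_le_card_height.trans (Fintype.card_fin l).le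
  have hdm : d ≤ m := hX0rank ▸ X0.rank_le_card_width.trans (Fintype.card_fin m).le
  -- row-deletion bound: finrank ≤ (l - (d-1)) * m
  have hrow : finrank F C ≤ (l - (d - 1)) * m := by
    apply key_bound C (le_trans (by omega) hdl)
    intro X hX hXne
    have := hmin X hX hXne
    omega
  -- column-deletion bound via transpose
  have hcol : finrank F C ≤ l * (m - (d - 1)) := by
    apply key_bound_col C (le_trans (by omega) hdm)
    intro X hX hXne
    have := hmin X hX hXne
    omega
  constructor
  · rcases le_total l m with h | h
    · rw [min_eq_left h, max_eq_right h]
      calc finrank F C ≤ l * (m - (d - 1)) := hcol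
        _ = l * (m - d + 1) := by congr 1; omega
    · rw [min_eq_right h, max_eq_left h]
      calc finrank F C ≤ (l - (d - 1)) * m := hrow
        _ = m * (l - d + 1) := by rw [mul_comm]; congr 1; omega
  · intro hlm heq
    have hm1 : 1 ≤ m := le_trans hd hdm
    have : l * m ≤ 2 * ((l - (d - 1)) * m) := by omega
    have h2 : l ≤ 2 * (l - (d - 1)) := by
      by_contra hc
      push_neg at hc
      have : 2 * ((l - (d - 1)) * m) < l * m := by
        calc 2 * ((l - (d - 1)) * m) = (2 * (l - (d-1))) * m := by ring
          _ < l * m := by exact Nat.mul_lt_mul_of_lt_of_le hc le_rfl hm1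
      omega
    omega
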